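/- Let ABCD be a convex quadrilateral in the Euclidean plane whose diagonals meet at a point O, where A, O, B are not collinear, and let φ = ∠AOB. Then dist B C + dist A D > (1 − φ/π) · (dist A C + dist B D). -/

import Mathlib

open Real EuclideanGeometry

private lemma key_side {P Q O : EuclideanSpace ℝ (Fin 2)} (hP : P ≠ O) (hQ : Q ≠ O)
    (h0 : 0 < ∠ P O Q) (hπ : ∠ P O Q < π) :
    (∠ P O Q / π) * (dist P O + dist Q O) < dist P Q := by
  set θ := ∠ P O Q with hθ
  set p := dist P O with hp
  set q := dist Q O with hq
  have hppos : 0 < p := dist_pos.2 hP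
  have hqpos : 0 < q := dist_pos.2 hQ
  have hlaw := EuclideanGeometry.law_cos P O Q
  have h2 : Real.cos (2 * (θ / 2)) = 2 * Real.cos (θ / 2) ^ 2 - 1 := Real.cos_two_mul _
  rw [show 2 * (θ / 2) = θ by ring] at h2
  have h3 := Real.sin_sq_add_cos_sq (θ / 2)
  have hcos : Real.cos θ = 1 - 2 * Real.sin (θ / 2) ^ 2 := by linarith
  have hsinnn : 0 ≤ Real.sin (θ / 2) :=
    Real.sin_nonneg_of_nonneg_of_le_pi (by linarith) (by linarith [Real.pi_pos])
  have hsq : ((p + q) * Real.sin (θ / 2)) ^ 2 ≤ dist P Q ^ 2 := by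
    have hc1 : -1 ≤ Real.cos θ := Real.neg_one_le_cos θ
    nlinarith [sq_nonneg (p - q)]
  have hle : (p + q) * Real.sin (θ / 2) ≤ dist P Q := by
    have := Real.sqrt_le_sqrt hsq
    rwa [Real.sqrt_sq (by positivity), Real.sqrt_sq dist_nonneg] at this
  have hjordan : 2 / π * (θ / 2) < Real.sin (θ / 2) :=
    Real.mul_lt_sin (by linarith) (by linarith)
  have hpi : (0 : ℝ) < π := Real.pi_pos
  calc (θ / π) * (p + q) = (2 / π * (θ / 2)) * (p + q) := by
        field_simp
    _ < Real.sin (θ / 2) * (p + q) :=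
        mul_lt_mul_of_pos_right hjordan (by linarith)
    _ ≤ dist P Q := by linarith [hle]

set_option maxHeartbeats 1000000 in
/-- For a convex quadrilateral `ABCD` in the plane whose diagonals meet at `O`, with
`φ = ∠AOB`, one has `BC + AD > (1 − φ/π)(AC + BD)`. -/
theorem diagonal_estimate_two (A B C D O : EuclideanSpace ℝ (Fin 2))
    (hAOC : Sbtw ℝ A O C) (hBOD : Sbtw ℝ B O D)
    (hncol : ¬ Collinear ℝ ({A, O, B} : Set (EuclideanSpace ℝ (Fin 2)))) :
    dist B C + dist A D > (1 - ∠ A O B / π) * (dist A C + dist B D) := by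
  have hA : A ≠ O := hAOC.left_ne
  have hB : B ≠ O := hBOD.left_ne
  have hC : C ≠ O := (hAOC.ne_right).symm
  have hD : D ≠ O := (hBOD.ne_right).symm
  have hπAOC : ∠ A O C = π := EuclideanGeometry.angle_eq_pi_iff_sbtw.2 hAOC
  have hπBOD : ∠ B O D = π := EuclideanGeometry.angle_eq_pi_iff_sbtw.2 hBOD
  set φ := ∠ A O B with hφ
  have hφ0 : φ ≠ 0 := fun h => hncol (EuclideanGeometry.collinear_of_angle_eq_zero h)
  have hφπ : φ ≠ π := fun h => hncol (EuclideanGeometry.collinear_of_angle_eq_pi h)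
  have hφpos : 0 < φ := lt_of_le_of_ne (EuclideanGeometry.angle_nonneg _ _ _) (Ne.symm hφ0)
  have hφlt : φ < π := lt_of_le_of_ne (EuclideanGeometry.angle_le_pi _ _ _) hφπ
  have hBOC := EuclideanGeometry.angle_add_angle_eq_pi_of_angle_eq_pi B hπAOC
  have hAOD := EuclideanGeometry.angle_add_angle_eq_pi_of_angle_eq_pi A hπBOD
  rw [EuclideanGeometry.angle_comm B O A] at hBOC
  have hBOCval : ∠ B O C = π - φ := by rw [hφ]; linarith
  have hAODval : ∠ A O D = π - φ := by rw [hφ]; linarith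
  have hpi : (0 : ℝ) < π := Real.pi_pos
  have h1 := key_side hB hC (P := B) (Q := C) (O := O)
    (by rw [hBOCval]; linarith) (by rw [hBOCval]; linarith)
  have h2 := key_side hA hD (P := A) (Q := D) (O := O)
    (by rw [hAODval]; linarith) (by rw [hAODval]; linarith)
  rw [hBOCval] at h1
  rw [hAODval] at h2
  have hAC : dist A O + dist O C = dist A C := hAOC.wbtw.dist_add_dist
  have hBD : dist B O + dist O D = dist B D := hBOD.wbtw.dist_add_dist
  have hfac : (π - φ) / π = 1 - φ / π := by field_simp
  rw [hfac] at h1 h2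
  rw [dist_comm C O] at h1
  rw [dist_comm D O] at h2
  rw [gt_iff_lt]
  calc (1 - φ / π) * (dist A C + dist B D)
      = (1 - φ / π) * (dist B O + dist O C) + (1 - φ / π) * (dist A O + dist O D) := by
        rw [← hAC, ← hBD]; ring
    _ < dist B C + dist A D := by linarith
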